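/- Let Φ = (φ_n) be a frame for a separable Hilbert space H and m = (m_n) a sequence of nonzero scalars. If G = (g_n) is a sequence in H such that for every dual frame Φ^d of Φ the multiplier M_{m,Φ^d,G}, given by f ↦ Σ_n m_n ⟨f,g_n⟩ φ_n^d, is well-defined on H and equals the zero operator, then g_n = 0 for all n. -/

import Mathlib

open scoped ComplexConjugate ComplexInnerProductSpace

variable {H : Type*} [NormedAddCommGroup H] [InnerProductSpace ℂ H] [CompleteSpace H]

/-- `Φ` is a Bessel sequence in `H`. -/
def IsBessel (Φ : ℕ → H) : Prop :=
  ∃ B : ℝ, 0 < B ∧ ∀ f : H, Summable (fun n => ‖⟪Φ n, f⟫‖ ^ 2) ∧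
    ∑' n, ‖⟪Φ n, f⟫‖ ^ 2 ≤ B * ‖f‖ ^ 2

/-- `Φ` is a frame for `H`. -/
def IsFrame (Φ : ℕ → H) : Prop :=
  ∃ A B : ℝ, 0 < A ∧ 0 < B ∧ ∀ f : H, Summable (fun n => ‖⟪Φ n, f⟫‖ ^ 2) ∧
    A * ‖f‖ ^ 2 ≤ ∑' n, ‖⟪Φ n, f⟫‖ ^ 2 ∧ ∑' n, ‖⟪Φ n, f⟫‖ ^ 2 ≤ B * ‖f‖ ^ 2

/-- `F` is a dual frame of the frame `Φ`:
`f = Σ ⟨f, Φ n⟩ F n = Σ ⟨f, F n⟩ Φ n` for all `f` (paper convention `⟨f, x⟩ = ⟪x, f⟫`). -/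
def IsDualFrame (Φ F : ℕ → H) : Prop :=
  IsFrame F ∧ ∀ f : H, HasSum (fun n => ⟪Φ n, f⟫ • F n) f ∧ HasSum (fun n => ⟪F n, f⟫ • Φ n) f

/-- `F` is an analysis pseudo-dual of `Φ`: `f = Σ ⟨f, F n⟩ Φ n` for all `f`. -/
def IsAPseudoDual (Φ F : ℕ → H) : Prop := ∀ f : H, HasSum (fun n => ⟪F n, f⟫ • Φ n) f

/-- `F` is a synthesis pseudo-dual of `Φ`: `f = Σ ⟨f, Φ n⟩ F n` for all `f`. -/
def IsSPseudoDual (Φ F : ℕ → H) : Prop := ∀ f : H, HasSum (fun n => ⟪Φ n, f⟫ • F n) f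

/-- The frame operator `S_Φ f = Σ ⟨f, Φ n⟩ Φ n`. -/
noncomputable def frameOp (Φ : ℕ → H) (f : H) : H := ∑' n, ⟪Φ n, f⟫ • Φ n

/-- `m` is semi-normalized: `0 < a ≤ ‖m n‖ ≤ b < ∞`. -/
def SemiNormalized (m : ℕ → ℂ) : Prop := ∃ a b : ℝ, 0 < a ∧ ∀ n, a ≤ ‖m n‖ ∧ ‖m n‖ ≤ b

set_option linter.unusedSectionVars false

/-- Bessel property with explicit bound. -/
def BesselBound (Φ : ℕ → H) (B : ℝ) : Prop :=
  ∀ f : H, Summable (fun n => ‖⟪Φ n, f⟫‖ ^ 2) ∧ ∑' n, ‖⟪Φ n, f⟫‖ ^ 2 ≤ B * ‖f‖ ^ 2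

lemma hasSum_inner_right' {a : ℕ → H} {s : H} (g : H) (h : HasSum a s) :
    HasSum (fun n => ⟪g, a n⟫) ⟪g, s⟫ := h.mapL (innerSL ℂ g)

lemma hasSum_inner_left' {a : ℕ → H} {s : H} (g : H) (h : HasSum a s) :
    HasSum (fun n => ⟪a n, g⟫) ⟪s, g⟫ := by
  have := h.map (AddMonoidHom.mk' (fun x : H => ⟪x, g⟫)
    (fun u v => inner_add_left u v g)) (continuous_id.inner continuous_const)
  exact this

lemma besselFinsetBound {Φ : ℕ → H} {B : ℝ} (hB : BesselBound Φ B) (hB0 : 0 ≤ B)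
    (c : ℕ → ℂ) (F : Finset ℕ) :
    ‖∑ n ∈ F, c n • Φ n‖ ^ 2 ≤ B * ∑ n ∈ F, ‖c n‖ ^ 2 := by
  set g : H := ∑ n ∈ F, c n • Φ n with hg
  have h1 : (‖g‖ : ℝ) ^ 2 = ‖⟪g, g⟫‖ := by
    rw [inner_self_eq_norm_sq_to_K]; simp [sq_abs]
  have h2 : ⟪g, g⟫ = ∑ n ∈ F, c n * ⟪g, Φ n⟫ := by
    nth_rewrite 2 [hg]
    rw [inner_sum]
    simp [inner_smul_right]
  have h3 : ‖⟪g, g⟫‖ ≤ ∑ n ∈ F, ‖c n‖ * ‖⟪g, Φ n⟫‖ := by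
    rw [h2]
    refine (norm_sum_le _ _).trans ?_
    simp
  have hcs := Finset.sum_mul_sq_le_sq_mul_sq F (fun n => ‖c n‖) (fun n => ‖⟪g, Φ n⟫‖)
  have h4 : ∑ n ∈ F, ‖⟪g, Φ n⟫‖ ^ 2 ≤ B * ‖g‖ ^ 2 := by
    have hsum := (hB g).1
    have : ∑ n ∈ F, ‖⟪g, Φ n⟫‖ ^ 2 = ∑ n ∈ F, ‖⟪Φ n, g⟫‖ ^ 2 := by
      simp [norm_inner_symm]
    rw [this]
    exact le_trans (Summable.sum_le_tsum F (fun n _ => by positivity) hsum) (hB g).2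
  have hc0 : (0:ℝ) ≤ ∑ n ∈ F, ‖c n‖ ^ 2 := Finset.sum_nonneg fun n _ => by positivity
  have h5 : ‖g‖ ^ 2 ≤ ∑ n ∈ F, ‖c n‖ * ‖⟪g, Φ n⟫‖ := h1 ▸ h3
  have h6 : (0:ℝ) ≤ ∑ n ∈ F, ‖c n‖ * ‖⟪g, Φ n⟫‖ :=
    Finset.sum_nonneg fun n _ => by positivity
  have h7 : (‖g‖ ^ 2) ^ 2 ≤ (∑ n ∈ F, ‖c n‖ ^ 2) * (B * ‖g‖ ^ 2) := by
    nlinarith [mul_le_mul_of_nonneg_left h4 hc0]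
  rcases eq_or_lt_of_le (sq_nonneg ‖g‖) with h8 | h8
  · rw [← h8]; positivity
  · nlinarith

lemma besselSummable {Φ : ℕ → H} {B : ℝ} (hB : BesselBound Φ B) (hB0 : 0 ≤ B)
    {c : ℕ → ℂ} (hc : Summable fun n => ‖c n‖ ^ 2) :
    Summable (fun n => c n • Φ n) := by
  rw [summable_iff_vanishing_norm]
  intro ε hε
  obtain ⟨s, hs⟩ := summable_iff_vanishing_norm.1 hc (ε ^ 2 / (B + 1)) (by positivity)
  refine ⟨s, fun t ht => ?_⟩
  have h1 := besselFinsetBound hB hB0 c t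
  have h2 := hs t ht
  have h3 : ∑ n ∈ t, ‖c n‖ ^ 2 ≤ ‖∑ n ∈ t, ‖c n‖ ^ 2‖ := le_abs_self _
  have h4 : ∑ n ∈ t, ‖c n‖ ^ 2 < ε ^ 2 / (B + 1) := lt_of_le_of_lt h3 h2
  have h5 : ‖∑ n ∈ t, c n • Φ n‖ ^ 2 < ε ^ 2 := by
    calc ‖∑ n ∈ t, c n • Φ n‖ ^ 2 ≤ B * ∑ n ∈ t, ‖c n‖ ^ 2 := h1
    _ ≤ (B+1) * ∑ n ∈ t, ‖c n‖ ^ 2 := by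
        have : (0:ℝ) ≤ ∑ n ∈ t, ‖c n‖ ^ 2 := Finset.sum_nonneg fun n _ => by positivity
        nlinarith
    _ < (B+1) * (ε ^ 2 / (B + 1)) := by
        apply mul_lt_mul_of_pos_left h4; linarith
    _ = ε ^ 2 := by field_simp
  nlinarith [norm_nonneg (∑ n ∈ t, c n • Φ n)]

lemma besselTsumBound {Φ : ℕ → H} {B : ℝ} (hB : BesselBound Φ B) (hB0 : 0 ≤ B)
    {c : ℕ → ℂ} (hc : Summable fun n => ‖c n‖ ^ 2) {g : H}
    (h : HasSum (fun n => c n • Φ n) g) :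
    ‖g‖ ^ 2 ≤ B * ∑' n, ‖c n‖ ^ 2 := by
  have ht : Filter.Tendsto (fun F : Finset ℕ => ‖∑ n ∈ F, c n • Φ n‖ ^ 2)
      Filter.atTop (nhds (‖g‖ ^ 2)) :=
    ((continuous_norm.tendsto g).comp h).pow 2
  refine le_of_tendsto ht (Filter.Eventually.of_forall fun F => ?_)
  refine (besselFinsetBound hB hB0 c F).trans ?_
  exact mul_le_mul_of_nonneg_left (Summable.sum_le_tsum F (fun n _ => by positivity) hc) hB0

/-- The frame operator as a continuous linear map. -/
noncomputable def besselOp (Φ : ℕ → H) {B : ℝ} (hB : BesselBound Φ B) (hB0 : 0 ≤ B) :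
    H →L[ℂ] H :=
  LinearMap.mkContinuous
    { toFun := fun f => ∑' n, ⟪Φ n, f⟫ • Φ n
      map_add' := fun f g => by
        have hf := besselSummable hB hB0 (hB f).1
        have hg := besselSummable hB hB0 (hB g).1
        show ∑' n, ⟪Φ n, f + g⟫ • Φ n = (∑' n, ⟪Φ n, f⟫ • Φ n) + ∑' n, ⟪Φ n, g⟫ • Φ n
        rw [← Summable.tsum_add hf hg]
        exact tsum_congr fun n => by rw [inner_add_right, add_smul]
      map_smul' := fun a f => by
        simp only [RingHom.id_apply]
        show ∑' n, ⟪Φ n, a • f⟫ • Φ n = a • ∑' n, ⟪Φ n, f⟫ • Φ n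
        rw [← tsum_const_smul'' a]
        exact tsum_congr fun n => by rw [inner_smul_right, mul_smul] }
    B (fun f => by
      have h := (besselSummable hB hB0 (hB f).1).hasSum
      have h2 := besselTsumBound hB hB0 (hB f).1 h
      have h3 : B * ∑' n, ‖⟪Φ n, f⟫‖ ^ 2 ≤ B * (B * ‖f‖ ^ 2) :=
        mul_le_mul_of_nonneg_left (hB f).2 hB0
      simp only [LinearMap.coe_mk, AddHom.coe_mk]
      nlinarith [norm_nonneg (∑' n, ⟪Φ n, f⟫ • Φ n), norm_nonneg f,
        mul_nonneg hB0 (norm_nonneg f)])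

lemma besselOp_hasSum {Φ : ℕ → H} {B : ℝ} (hB : BesselBound Φ B) (hB0 : 0 ≤ B) (f : H) :
    HasSum (fun n => ⟪Φ n, f⟫ • Φ n) (besselOp Φ hB hB0 f) :=
  (besselSummable hB hB0 (hB f).1).hasSum

lemma besselOp_adjoint {Φ : ℕ → H} {B : ℝ} (hB : BesselBound Φ B) (hB0 : 0 ≤ B) (f g : H) :
    ⟪besselOp Φ hB hB0 f, g⟫ = ⟪f, besselOp Φ hB hB0 g⟫ := by
  have h1 : HasSum (fun n => ⟪f, Φ n⟫ * ⟪Φ n, g⟫) ⟪besselOp Φ hB hB0 f, g⟫ := by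
    have := hasSum_inner_left' g (besselOp_hasSum hB hB0 f)
    simp only [inner_smul_left, inner_conj_symm] at this
    exact this
  have h2 : HasSum (fun n => ⟪f, Φ n⟫ * ⟪Φ n, g⟫) ⟪f, besselOp Φ hB hB0 g⟫ := by
    have := hasSum_inner_right' f (besselOp_hasSum hB hB0 g)
    simp only [inner_smul_right] at this
    have he : (fun n => ⟪Φ n, g⟫ * ⟪f, Φ n⟫) = fun n => ⟪f, Φ n⟫ * ⟪Φ n, g⟫ := by
      funext n; ring
    rwa [he] at this
  exact h1.unique h2

lemma besselOp_inner_self {Φ : ℕ → H} {B : ℝ} (hB : BesselBound Φ B) (hB0 : 0 ≤ B) (f : H) :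
    ⟪f, besselOp Φ hB hB0 f⟫ = ((∑' n, ‖⟪Φ n, f⟫‖ ^ 2 : ℝ) : ℂ) := by
  have h1 : HasSum (fun n => ⟪Φ n, f⟫ * ⟪f, Φ n⟫) ⟪f, besselOp Φ hB hB0 f⟫ := by
    have := hasSum_inner_right' f (besselOp_hasSum hB hB0 f)
    simpa only [inner_smul_right] using this
  have h2 : HasSum (fun n => ⟪Φ n, f⟫ * ⟪f, Φ n⟫) ((∑' n, ‖⟪Φ n, f⟫‖ ^ 2 : ℝ) : ℂ) := by
    have hr : HasSum (fun n => (‖⟪Φ n, f⟫‖ ^ 2 : ℝ)) (∑' n, ‖⟪Φ n, f⟫‖ ^ 2) := (hB f).1.hasSum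
    have := hr.mapL Complex.ofRealCLM
    simp only [Complex.ofRealCLM_apply] at this
    have he : (fun n => ((‖⟪Φ n, f⟫‖ ^ 2 : ℝ) : ℂ)) = fun n => ⟪Φ n, f⟫ * ⟪f, Φ n⟫ := by
      funext n
      rw [← inner_conj_symm f (Φ n), Complex.mul_conj]
      norm_cast
      rw [Complex.normSq_eq_norm_sq]
    rwa [he] at this
  exact (h2.unique h1).symm

lemma besselOp_norm_lower {Φ : ℕ → H} {A B : ℝ} (hB : BesselBound Φ B) (hB0 : 0 ≤ B)
    (hA : ∀ f : H, A * ‖f‖ ^ 2 ≤ ∑' n, ‖⟪Φ n, f⟫‖ ^ 2) (f : H) :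
    A * ‖f‖ ≤ ‖besselOp Φ hB hB0 f‖ := by
  have h1 : A * ‖f‖ ^ 2 ≤ ‖⟪f, besselOp Φ hB hB0 f⟫‖ := by
    rw [besselOp_inner_self hB hB0 f]
    have h2 : (0:ℝ) ≤ ∑' n, ‖⟪Φ n, f⟫‖ ^ 2 := tsum_nonneg fun n => by positivity
    rw [Complex.norm_real]
    rw [Real.norm_eq_abs, abs_of_nonneg h2]
    exact hA f
  have h2 : ‖⟪f, besselOp Φ hB hB0 f⟫‖ ≤ ‖f‖ * ‖besselOp Φ hB hB0 f‖ := norm_inner_le_norm _ _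
  rcases eq_or_ne f 0 with rfl | hf
  · simp
  · have hfn : 0 < ‖f‖ := norm_pos_iff.2 hf
    have h3 := h1.trans h2
    nlinarith

/-- The frame operator of a frame, as a continuous linear equivalence. -/
noncomputable def frameOpEquiv {Φ : ℕ → H} {A B : ℝ} (hB : BesselBound Φ B) (hB0 : 0 ≤ B)
    (hA : ∀ f : H, A * ‖f‖ ^ 2 ≤ ∑' n, ‖⟪Φ n, f⟫‖ ^ 2) (hA0 : 0 < A) : H ≃L[ℂ] H := by
  refine ContinuousLinearEquiv.ofBijective (besselOp Φ hB hB0) ?_ ?_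
  · rw [LinearMap.ker_eq_bot']
    intro f hf
    have := besselOp_norm_lower hB hB0 hA f
    rw [show besselOp Φ hB hB0 f = 0 from hf] at this
    simp only [norm_zero] at this
    have : ‖f‖ ≤ 0 := by nlinarith
    exact norm_le_zero_iff.1 this
  · -- closed range + dense range
    set S := besselOp Φ hB hB0 with hS
    have hanti : AntilipschitzWith (⟨A, hA0.le⟩ : NNReal)⁻¹ S := by
      apply ContinuousLinearMap.antilipschitz_of_bound
      intro x
      have h := besselOp_norm_lower hB hB0 hA x
      have hx : ‖x‖ ≤ A⁻¹ * ‖S x‖ := by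
        rw [le_inv_mul_iff₀ hA0]; exact h
      exact hx
    have hclosed : IsClosed ((LinearMap.range (S : H →ₗ[ℂ] H) : Submodule ℂ H) : Set H) := by
      have : ((LinearMap.range (S : H →ₗ[ℂ] H) : Submodule ℂ H) : Set H) = Set.range S := by
        ext x; simp [LinearMap.mem_range, Set.mem_range]
      rw [this]
      exact hanti.isClosed_range S.uniformContinuous
    haveI : CompleteSpace (LinearMap.range (S : H →ₗ[ℂ] H) : Submodule ℂ H) := hclosed.completeSpace_coe
    rw [← Submodule.orthogonal_eq_bot_iff]
    rw [Submodule.eq_bot_iff]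
    intro g hg
    rw [Submodule.mem_orthogonal] at hg
    have h0 : ⟪g, S g⟫ = 0 := by
      have := hg (S g) (LinearMap.mem_range_self _ g)
      rw [← inner_conj_symm]
      rw [this]
      simp
    have h1 : A * ‖g‖ ^ 2 ≤ 0 := by
      have := besselOp_inner_self hB hB0 g
      rw [h0] at this
      have h2 : (∑' n, ‖⟪Φ n, g⟫‖ ^ 2 : ℝ) = 0 := by exact_mod_cast this.symm
      rw [← h2]
      exact hA g
    have : ‖g‖ ^ 2 ≤ 0 := by nlinarith
    have : ‖g‖ = 0 := by nlinarith [sq_nonneg ‖g‖, norm_nonneg g]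
    exact norm_eq_zero.1 this

lemma frameOpEquiv_apply {Φ : ℕ → H} {A B : ℝ} (hB : BesselBound Φ B) (hB0 : 0 ≤ B)
    (hA : ∀ f : H, A * ‖f‖ ^ 2 ≤ ∑' n, ‖⟪Φ n, f⟫‖ ^ 2) (hA0 : 0 < A) (f : H) :
    frameOpEquiv hB hB0 hA hA0 f = besselOp Φ hB hB0 f := rfl

lemma tsum_cs {a b : ℕ → ℝ} (ha : Summable fun n => a n ^ 2) (hb : Summable fun n => b n ^ 2)
    (ha0 : ∀ n, 0 ≤ a n) (hb0 : ∀ n, 0 ≤ b n) :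
    Summable (fun n => a n * b n) ∧
      (∑' n, a n * b n) ^ 2 ≤ (∑' n, a n ^ 2) * (∑' n, b n ^ 2) := by
  have hsum : Summable (fun n => a n * b n) := by
    refine Summable.of_nonneg_of_le (fun n => mul_nonneg (ha0 n) (hb0 n))
      (fun n => ?_) ((ha.add hb).div_const 2)
    have h := sq_nonneg (a n - b n)
    have hgoal : a n * b n ≤ (a n ^ 2 + b n ^ 2) / 2 := by nlinarith
    simpa using hgoal
  refine ⟨hsum, ?_⟩
  have hA0 : (0:ℝ) ≤ ∑' n, a n ^ 2 := tsum_nonneg fun n => sq_nonneg _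
  have hB0 : (0:ℝ) ≤ ∑' n, b n ^ 2 := tsum_nonneg fun n => sq_nonneg _
  have h1 : ∑' n, a n * b n ≤ Real.sqrt ((∑' n, a n ^ 2) * (∑' n, b n ^ 2)) := by
    refine Summable.tsum_le_of_sum_le hsum fun F => ?_
    have h2 := Finset.sum_mul_sq_le_sq_mul_sq F a b
    have h3 : ∑ n ∈ F, a n ^ 2 ≤ ∑' n, a n ^ 2 := Summable.sum_le_tsum F (fun n _ => sq_nonneg _) ha
    have h4 : ∑ n ∈ F, b n ^ 2 ≤ ∑' n, b n ^ 2 := Summable.sum_le_tsum F (fun n _ => sq_nonneg _) hb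
    have h5 : (0:ℝ) ≤ ∑ n ∈ F, a n * b n :=
      Finset.sum_nonneg fun n _ => mul_nonneg (ha0 n) (hb0 n)
    rw [show ∑ n ∈ F, a n * b n = Real.sqrt ((∑ n ∈ F, a n * b n)^2) from
      (Real.sqrt_sq h5).symm]
    apply Real.sqrt_le_sqrt
    refine h2.trans ?_
    have h6 : (0:ℝ) ≤ ∑ n ∈ F, a n ^ 2 := Finset.sum_nonneg fun n _ => sq_nonneg _
    nlinarith
  have h0 : (0:ℝ) ≤ ∑' n, a n * b n := tsum_nonneg fun n => mul_nonneg (ha0 n) (hb0 n)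
  calc (∑' n, a n * b n) ^ 2 ≤ Real.sqrt ((∑' n, a n ^ 2) * (∑' n, b n ^ 2)) ^ 2 := by
        exact pow_le_pow_left₀ h0 h1 2
  _ = (∑' n, a n ^ 2) * (∑' n, b n ^ 2) := Real.sq_sqrt (mul_nonneg hA0 hB0)

lemma lowerBound_of_recon {Φ F : ℕ → H} {B : ℝ} (hB : BesselBound Φ B) (hB0 : 0 < B)
    (f : H) (hrec : HasSum (fun n => ⟪F n, f⟫ • Φ n) f)
    (hsum : Summable fun n => ‖⟪F n, f⟫‖ ^ 2) :
    B⁻¹ * ‖f‖ ^ 2 ≤ ∑' n, ‖⟪F n, f⟫‖ ^ 2 := by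
  set a : ℕ → ℝ := fun n => ‖⟪F n, f⟫‖ with hadef
  set b : ℕ → ℝ := fun n => ‖⟪Φ n, f⟫‖ with hbdef
  obtain ⟨hab, habsq⟩ := tsum_cs hsum (hB f).1 (fun n => norm_nonneg _) (fun n => norm_nonneg _)
  have hT0 : (0:ℝ) ≤ ∑' n, a n ^ 2 := tsum_nonneg fun n => sq_nonneg _
  rcases eq_or_ne f 0 with rfl | hf
  · have h0 : (0:ℝ) ≤ ∑' n, ‖⟪F n, (0:H)⟫‖ ^ 2 := tsum_nonneg fun n => by positivity
    simpa using h0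
  have hkey : HasSum (fun n => ⟪F n, f⟫ * ⟪f, Φ n⟫) ⟪f, f⟫ := by
    have := hasSum_inner_right' f hrec
    simpa only [inner_smul_right] using this
  have hnorm : ‖f‖ ^ 2 ≤ ∑' n, a n * b n := by
    have h1 : ‖f‖ ^ 2 = ‖⟪f, f⟫‖ := by rw [inner_self_eq_norm_sq_to_K]; simp [sq_abs]
    rw [h1, ← hkey.tsum_eq]
    refine (norm_tsum_le_tsum_norm ?_).trans_eq ?_
    · refine hab.congr fun n => ?_
      rw [norm_mul, norm_inner_symm f (Φ n)]
    · exact tsum_congr fun n => by rw [norm_mul, norm_inner_symm f (Φ n)]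
  have hΦb : ∑' n, b n ^ 2 ≤ B * ‖f‖ ^ 2 := (hB f).2
  have hfn : 0 < ‖f‖ := norm_pos_iff.2 hf
  have h2 : (‖f‖ ^ 2) ^ 2 ≤ (∑' n, a n ^ 2) * (B * ‖f‖ ^ 2) := by
    have hx : (0:ℝ) ≤ ∑' n, a n * b n := tsum_nonneg fun n => by positivity
    nlinarith [mul_le_mul_of_nonneg_left hΦb hT0]
  rw [inv_mul_le_iff₀ hB0]
  have h3 : ‖f‖ ^ 2 * ‖f‖ ^ 2 ≤ (B * ∑' n, a n ^ 2) * ‖f‖ ^ 2 := by nlinarith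
  have h4 := le_of_mul_le_mul_right h3 (by positivity : (0:ℝ) < ‖f‖ ^ 2)
  exact h4

lemma besselBound_mono {Ψ : ℕ → H} {b b' : ℝ} (h : BesselBound Ψ b) (hb : b ≤ b') :
    BesselBound Ψ b' := fun f =>
  ⟨(h f).1, (h f).2.trans (mul_le_mul_of_nonneg_right hb (sq_nonneg _))⟩

lemma besselBound_add_rankOne {Ψ : ℕ → H} {BD : ℝ} (hΨ : BesselBound Ψ BD)
    (c : ℕ → ℂ) {Cc : ℝ} (hc : Summable fun n => ‖c n‖ ^ 2) (hCc : ∑' n, ‖c n‖ ^ 2 ≤ Cc)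
    (w : H) :
    BesselBound (fun n => Ψ n + c n • w) (2 * BD + 2 * Cc * ‖w‖ ^ 2) := by
  intro f
  have hterm : ∀ n, ‖⟪Ψ n + c n • w, f⟫‖ ^ 2 ≤
      2 * ‖⟪Ψ n, f⟫‖ ^ 2 + 2 * (‖c n‖ ^ 2 * ‖⟪w, f⟫‖ ^ 2) := by
    intro n
    have h1 : ‖⟪Ψ n + c n • w, f⟫‖ ≤ ‖⟪Ψ n, f⟫‖ + ‖c n‖ * ‖⟪w, f⟫‖ := by
      rw [inner_add_left, inner_smul_left]
      refine (norm_add_le _ _).trans ?_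
      rw [norm_mul, RCLike.norm_conj]
    nlinarith [norm_nonneg (⟪Ψ n + c n • w, f⟫), norm_nonneg (⟪Ψ n, f⟫),
      mul_nonneg (norm_nonneg (c n)) (norm_nonneg (⟪w, f⟫)),
      sq_nonneg (‖⟪Ψ n, f⟫‖ - ‖c n‖ * ‖⟪w, f⟫‖), mul_pow (‖c n‖) (‖⟪w, f⟫‖) 2]
  have hg : Summable (fun n => 2 * ‖⟪Ψ n, f⟫‖ ^ 2 + 2 * (‖c n‖ ^ 2 * ‖⟪w, f⟫‖ ^ 2)) := by
    refine Summable.add (((hΨ f).1).mul_left 2) ?_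
    exact ((hc.mul_right (‖⟪w, f⟫‖ ^ 2)).mul_left 2)
  have hsum : Summable (fun n => ‖⟪Ψ n + c n • w, f⟫‖ ^ 2) :=
    Summable.of_nonneg_of_le (fun n => by positivity) hterm hg
  refine ⟨hsum, ?_⟩
  have h2 : ∑' n, ‖⟪Ψ n + c n • w, f⟫‖ ^ 2 ≤
      ∑' n, (2 * ‖⟪Ψ n, f⟫‖ ^ 2 + 2 * (‖c n‖ ^ 2 * ‖⟪w, f⟫‖ ^ 2)) :=
    Summable.tsum_le_tsum hterm hsum hg
  refine h2.trans ?_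
  rw [Summable.tsum_add (((hΨ f).1).mul_left 2) (((hc.mul_right (‖⟪w, f⟫‖ ^ 2)).mul_left 2))]
  rw [tsum_mul_left, tsum_mul_left, tsum_mul_right]
  have h3 : 2 * ∑' n, ‖⟪Ψ n, f⟫‖ ^ 2 ≤ 2 * (BD * ‖f‖ ^ 2) := by linarith [(hΨ f).2]
  have h4 : (∑' n, ‖c n‖ ^ 2) * ‖⟪w, f⟫‖ ^ 2 ≤ Cc * (‖w‖ ^ 2 * ‖f‖ ^ 2) := by
    have h5 : ‖⟪w, f⟫‖ ^ 2 ≤ ‖w‖ ^ 2 * ‖f‖ ^ 2 := by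
      have := norm_inner_le_norm (𝕜 := ℂ) w f
      nlinarith [norm_nonneg (⟪w, f⟫), mul_nonneg (norm_nonneg w) (norm_nonneg f)]
    have hc0 : (0:ℝ) ≤ ∑' n, ‖c n‖ ^ 2 := tsum_nonneg fun n => by positivity
    have hCc0 : (0:ℝ) ≤ Cc := hc0.trans hCc
    exact mul_le_mul hCc h5 (by positivity) hCc0
  nlinarith

section CanonicalDual

variable {Φ : ℕ → H} {A B : ℝ} (hB : BesselBound Φ B) (hB0 : 0 ≤ B)
  (hA : ∀ f : H, A * ‖f‖ ^ 2 ≤ ∑' n, ‖⟪Φ n, f⟫‖ ^ 2) (hA0 : 0 < A)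

lemma frameOpEquiv_symm_adjoint (x y : H) :
    ⟪(frameOpEquiv hB hB0 hA hA0).symm x, y⟫ = ⟪x, (frameOpEquiv hB hB0 hA hA0).symm y⟫ := by
  set e := frameOpEquiv hB hB0 hA hA0 with he
  calc ⟪e.symm x, y⟫ = ⟪e.symm x, e (e.symm y)⟫ := by rw [e.apply_symm_apply]
  _ = ⟪e.symm x, besselOp Φ hB hB0 (e.symm y)⟫ := rfl
  _ = ⟪besselOp Φ hB hB0 (e.symm x), e.symm y⟫ := (besselOp_adjoint hB hB0 _ _).symm
  _ = ⟪e (e.symm x), e.symm y⟫ := rfl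
  _ = ⟪x, e.symm y⟫ := by rw [e.apply_symm_apply]

lemma canDual_recon1 (f : H) :
    HasSum (fun n => ⟪Φ n, f⟫ • (frameOpEquiv hB hB0 hA hA0).symm (Φ n)) f := by
  set e := frameOpEquiv hB hB0 hA hA0 with he
  have h := (besselOp_hasSum hB hB0 f).mapL (e.symm : H →L[ℂ] H)
  have h2 : (e.symm : H →L[ℂ] H) (besselOp Φ hB hB0 f) = f := e.symm_apply_apply f
  rw [h2] at h
  have h3 : (fun n => (e.symm : H →L[ℂ] H) (⟪Φ n, f⟫ • Φ n))
      = fun n => ⟪Φ n, f⟫ • e.symm (Φ n) := by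
    funext n; simp [map_smul]
  rwa [h3] at h

lemma canDual_recon2 (f : H) :
    HasSum (fun n => ⟪(frameOpEquiv hB hB0 hA hA0).symm (Φ n), f⟫ • Φ n) f := by
  set e := frameOpEquiv hB hB0 hA hA0 with he
  have h := besselOp_hasSum hB hB0 (e.symm f)
  have h2 : besselOp Φ hB hB0 (e.symm f) = f := e.apply_symm_apply f
  rw [h2] at h
  have h3 : (fun n => ⟪Φ n, e.symm f⟫ • Φ n)
      = fun n => ⟪e.symm (Φ n), f⟫ • Φ n := by
    funext n; rw [frameOpEquiv_symm_adjoint hB hB0 hA hA0 (Φ n) f]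
  rwa [h3] at h

lemma canDual_bessel :
    BesselBound (fun n => (frameOpEquiv hB hB0 hA hA0).symm (Φ n))
      (B * ‖((frameOpEquiv hB hB0 hA hA0).symm : H →L[ℂ] H)‖ ^ 2 + 1) := by
  set e := frameOpEquiv hB hB0 hA hA0 with he
  intro f
  have hcongr : ∀ n, ‖⟪e.symm (Φ n), f⟫‖ ^ 2 = ‖⟪Φ n, e.symm f⟫‖ ^ 2 := fun n => by
    rw [frameOpEquiv_symm_adjoint hB hB0 hA hA0 (Φ n) f]
  constructor
  · exact ((hB (e.symm f)).1).congr fun n => (hcongr n).symm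
  · rw [tsum_congr hcongr]
    refine (hB (e.symm f)).2.trans ?_
    have h1 : ‖e.symm f‖ ≤ ‖(e.symm : H →L[ℂ] H)‖ * ‖f‖ := (e.symm : H →L[ℂ] H).le_opNorm f
    have h2 : ‖e.symm f‖ ^ 2 ≤ ‖(e.symm : H →L[ℂ] H)‖ ^ 2 * ‖f‖ ^ 2 := by
      nlinarith [norm_nonneg (e.symm f), norm_nonneg ((e.symm : H →L[ℂ] H)),
        norm_nonneg f, mul_nonneg (norm_nonneg ((e.symm : H →L[ℂ] H))) (norm_nonneg f)]
    nlinarith [sq_nonneg ‖f‖, mul_le_mul_of_nonneg_left h2 hB0]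

end CanonicalDual

theorem stmt1 (Φ G : ℕ → H) (m : ℕ → ℂ) (hΦ : IsFrame Φ) (hm : ∀ n, m n ≠ 0)
    (hG : ∀ Φd : ℕ → H, IsDualFrame Φ Φd → ∀ f : H,
      HasSum (fun n => (m n * ⟪G n, f⟫) • Φd n) 0) :
    ∀ n, G n = 0 := by
  intro k
  by_cases htriv : ∀ x : H, x = 0
  · exact htriv _
  push_neg at htriv
  obtain ⟨w, hw⟩ := htriv
  obtain ⟨A, B, hA0, hB0pos, hfr⟩ := hΦ
  have hB : BesselBound Φ B := fun f => ⟨(hfr f).1, (hfr f).2.2⟩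
  have hA : ∀ f : H, A * ‖f‖ ^ 2 ≤ ∑' n, ‖⟪Φ n, f⟫‖ ^ 2 := fun f => (hfr f).2.1
  have hB0 : (0:ℝ) ≤ B := hB0pos.le
  set e := frameOpEquiv hB hB0 hA hA0 with he
  set ΦD : ℕ → H := fun n => e.symm (Φ n) with hΦD
  set BD : ℝ := B * ‖(e.symm : H →L[ℂ] H)‖ ^ 2 + 1 with hBD
  have hbesselD : BesselBound ΦD BD := canDual_bessel hB hB0 hA hA0
  have hBD0 : (0:ℝ) < BD := by positivity
  have hreconD1 : ∀ f : H, HasSum (fun n => ⟪Φ n, f⟫ • ΦD n) f := canDual_recon1 hB hB0 hA hA0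
  have hreconD2 : ∀ f : H, HasSum (fun n => ⟪ΦD n, f⟫ • Φ n) f := canDual_recon2 hB hB0 hA hA0
  have hframeD : IsFrame ΦD := by
    refine ⟨B⁻¹, BD, by positivity, hBD0, fun f => ?_⟩
    exact ⟨(hbesselD f).1,
      lowerBound_of_recon hB hB0pos f (hreconD2 f) (hbesselD f).1, (hbesselD f).2⟩
  have hdualD : IsDualFrame Φ ΦD := ⟨hframeD, fun f => ⟨hreconD1 f, hreconD2 f⟩⟩
  -- the perturbation coefficients
  set c : ℕ → ℂ := fun n => (if n = k then 1 else 0) - ⟪Φ k, ΦD n⟫ with hc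
  have hcs : Summable fun n => ‖c n‖ ^ 2 := by
    refine Summable.of_nonneg_of_le (fun n => by positivity)
      (fun n => ?_) (Summable.add ((hasSum_ite_eq k (2:ℝ)).summable)
        (((hbesselD (Φ k)).1).mul_left 2))
    have h1 : ‖c n‖ ≤ ‖(if n = k then (1:ℂ) else 0)‖ + ‖⟪Φ k, ΦD n⟫‖ := norm_sub_le _ _
    have h2 : ‖⟪Φ k, ΦD n⟫‖ = ‖⟪ΦD n, Φ k⟫‖ := norm_inner_symm _ _
    by_cases hn : n = k
    · subst hn
      rw [if_pos rfl] at h1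
      rw [if_pos rfl]
      rw [h2, norm_one] at h1
      nlinarith [norm_nonneg (c n), norm_nonneg (⟪ΦD n, Φ n⟫), norm_nonneg (⟪Φ n, ΦD n⟫),
        sq_nonneg (1 - ‖⟪ΦD n, Φ n⟫‖)]
    · simp only [if_neg hn] at h1 ⊢
      rw [h2] at h1
      simp only [norm_zero, zero_add] at h1
      nlinarith [norm_nonneg (c n), norm_nonneg (⟪ΦD n, Φ k⟫)]
  set Cc : ℝ := ∑' n, ‖c n‖ ^ 2 with hCcdef
  have hCc0 : (0:ℝ) ≤ Cc := tsum_nonneg fun n => by positivity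
  set Φd : ℕ → H := fun n => ΦD n + c n • w with hΦd
  have hconj_c : ∀ n, (starRingEnd ℂ) (c n) = (if n = k then 1 else 0) - ⟪ΦD n, Φ k⟫ := by
    intro n
    rw [hc]
    simp only [map_sub, inner_conj_symm]
    congr 1
    by_cases hn : n = k <;> simp [hn]
  have hsum_cΦ : HasSum (fun n => (starRingEnd ℂ) (c n) • Φ n) 0 := by
    have h1 : HasSum (fun n => (if n = k then (1:ℂ) else 0) • Φ n) (Φ k) := by
      have heq : (fun n => (if n = k then (1:ℂ) else 0) • Φ n)
          = fun n => if n = k then Φ k else 0 := by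
        funext n; by_cases hn : n = k <;> simp [hn]
      rw [heq]; exact hasSum_ite_eq k (Φ k)
    have h2 : HasSum (fun n => ⟪ΦD n, Φ k⟫ • Φ n) (Φ k) := hreconD2 (Φ k)
    have h3 := h1.sub h2
    rw [sub_self] at h3
    have heq2 : (fun n => (if n = k then (1:ℂ) else 0) • Φ n - ⟪ΦD n, Φ k⟫ • Φ n)
        = fun n => (starRingEnd ℂ) (c n) • Φ n := by
      funext n; rw [hconj_c n, sub_smul]
    rwa [heq2] at h3
  have hscalar0 : ∀ f : H, HasSum (fun n => ⟪Φ n, f⟫ * c n) 0 := by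
    intro f
    have h1 : HasSum (fun n => ⟪Φ n, f⟫ * (if n = k then 1 else 0)) ⟪Φ k, f⟫ := by
      have heq : (fun n => ⟪Φ n, f⟫ * (if n = k then (1:ℂ) else 0))
          = fun n => if n = k then ⟪Φ k, f⟫ else 0 := by
        funext n; by_cases hn : n = k <;> simp [hn]
      rw [heq]; exact hasSum_ite_eq k _
    have h2 : HasSum (fun n => ⟪Φ n, f⟫ * ⟪Φ k, ΦD n⟫) ⟪Φ k, f⟫ := by
      have h := hasSum_inner_right' (Φ k) (hreconD1 f)
      have heq : (fun n => ⟪Φ k, ⟪Φ n, f⟫ • ΦD n⟫) = fun n => ⟪Φ n, f⟫ * ⟪Φ k, ΦD n⟫ := by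
        funext n; rw [inner_smul_right]
      rwa [heq] at h
    have h3 := h1.sub h2
    rw [sub_self] at h3
    have heq : (fun n => ⟪Φ n, f⟫ * (if n = k then (1:ℂ) else 0) - ⟪Φ n, f⟫ * ⟪Φ k, ΦD n⟫)
        = fun n => ⟪Φ n, f⟫ * c n := by
      funext n; simp only [hc]; ring
    rwa [heq] at h3
  have hrecon1d : ∀ f : H, HasSum (fun n => ⟪Φ n, f⟫ • Φd n) f := by
    intro f
    have h1 := (hreconD1 f).add ((hscalar0 f).smul_const w)
    rw [zero_smul, add_zero] at h1
    have heq : (fun n => ⟪Φ n, f⟫ • ΦD n + (⟪Φ n, f⟫ * c n) • w)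
        = fun n => ⟪Φ n, f⟫ • Φd n := by
      funext n; simp only [hΦd, smul_add, smul_smul]
    rwa [heq] at h1
  have hrecon2d : ∀ f : H, HasSum (fun n => ⟪Φd n, f⟫ • Φ n) f := by
    intro f
    have h1 := (hreconD2 f).add (hsum_cΦ.const_smul (⟪w, f⟫ : ℂ))
    rw [smul_zero, add_zero] at h1
    have heq : (fun n => ⟪ΦD n, f⟫ • Φ n + (⟪w, f⟫ : ℂ) • ((starRingEnd ℂ) (c n) • Φ n))
        = fun n => ⟪Φd n, f⟫ • Φ n := by
      funext n
      simp only [hΦd, inner_add_left, inner_smul_left]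
      rw [add_smul, smul_smul, mul_comm]
    rwa [heq] at h1
  have hbesselP : BesselBound Φd (2 * BD + 2 * Cc * ‖w‖ ^ 2) := by
    have := besselBound_add_rankOne hbesselD c hcs (le_refl Cc) w
    exact this
  have hdualP : IsDualFrame Φ Φd := by
    refine ⟨⟨B⁻¹, 2 * BD + 2 * Cc * ‖w‖ ^ 2, by positivity,
      by nlinarith [mul_nonneg (mul_nonneg (by norm_num : (0:ℝ) ≤ 2) hCc0) (sq_nonneg ‖w‖)],
      fun f => ?_⟩, fun f => ⟨hrecon1d f, hrecon2d f⟩⟩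
    exact ⟨(hbesselP f).1, lowerBound_of_recon hB hB0pos f (hrecon2d f) (hbesselP f).1,
      (hbesselP f).2⟩
  have hkey : ∀ f : H, m k * ⟪G k, f⟫ = 0 := by
    intro f
    have HI := hG ΦD hdualD f
    have HII := hG Φd hdualP f
    have hdiff := HII.sub HI
    rw [sub_self] at hdiff
    have heq : (fun n => (m n * ⟪G n, f⟫) • Φd n - (m n * ⟪G n, f⟫) • ΦD n)
        = fun n => (m n * ⟪G n, f⟫ * c n) • w := by
      funext n
      simp only [hΦd, smul_add]
      rw [add_sub_cancel_left, smul_smul]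
    rw [heq] at hdiff
    have hdiff2 := hasSum_inner_right' w hdiff
    rw [inner_zero_right] at hdiff2
    have heq2 : (fun n => ⟪w, (m n * ⟪G n, f⟫ * c n) • w⟫)
        = fun n => m n * ⟪G n, f⟫ * c n * ⟪w, w⟫ := by
      funext n; rw [inner_smul_right]; try ring
    rw [heq2] at hdiff2
    have hww : (⟪w, w⟫ : ℂ) ≠ 0 := by
      rw [ne_eq, inner_self_eq_zero]; exact hw
    have hsc : HasSum (fun n => m n * ⟪G n, f⟫ * c n) 0 := by
      have h := hdiff2.div_const ⟪w, w⟫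
      rw [zero_div] at h
      have heq3 : (fun n => m n * ⟪G n, f⟫ * c n * ⟪w, w⟫ / ⟪w, w⟫)
          = fun n => m n * ⟪G n, f⟫ * c n := by
        funext n; field_simp
      rwa [heq3] at h
    have hJ : HasSum (fun n => m n * ⟪G n, f⟫ * ⟪Φ k, ΦD n⟫) 0 := by
      have h := hasSum_inner_right' (Φ k) HI
      rw [inner_zero_right] at h
      have heq4 : (fun n => ⟪Φ k, (m n * ⟪G n, f⟫) • ΦD n⟫)
          = fun n => m n * ⟪G n, f⟫ * ⟪Φ k, ΦD n⟫ := by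
        funext n; rw [inner_smul_right]
      rwa [heq4] at h
    have hsum2 := hsc.add hJ
    rw [add_zero] at hsum2
    have heq5 : (fun n => m n * ⟪G n, f⟫ * c n + m n * ⟪G n, f⟫ * ⟪Φ k, ΦD n⟫)
        = fun n => if n = k then m k * ⟪G k, f⟫ else 0 := by
      funext n
      simp only [hc]
      by_cases hn : n = k
      · subst hn; simp; ring
      · simp only [if_neg hn]; try ring
    rw [heq5] at hsum2
    exact ((hasSum_ite_eq k (m k * ⟪G k, f⟫)).unique hsum2)
  have h7 := hkey (G k)
  rcases mul_eq_zero.1 h7 with h | h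
  · exact absurd h (hm k)
  · exact inner_self_eq_zero.1 h
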